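/- Let F be a CNF formula of index-width k whose variables are partitioned into n blocks of at most m variables each, and let F' be its extension-variable 3-CNF encoding. If F' admits a resolution refutation of width w and depth d, then F admits a resolution refutation of index-width at most a·w and depth at most a·d·m, where the constant a depends only on k. -/

import Mathlib

namespace Paper


/-! ### Clauses, CNFs and resolution refutations -/

/-- A clause: a finite set of literals (variable, polarity), read as a disjunction. -/
abbrev Clause (V : Type) := Finset (V × Bool)

/-- An assignment satisfies a clause if it satisfies some literal of it. -/
def SatC {V : Type} (α : V → Bool) (C : Clause V) : Prop := ∃ l ∈ C, α l.1 = l.2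

/-- A set of clauses is unsatisfiable. -/
def Unsat {V : Type} (F : Set (Clause V)) : Prop := ∀ α : V → Bool, ∃ C ∈ F, ¬ SatC α C

/-- A resolution refutation of `F`: a sequence of clauses ending in the empty clause,
each clause either in `F` or obtained from two earlier clauses by the resolution rule
(the premises being recorded in `prem`). -/
structure Refutation (V : Type) [DecidableEq V] (F : Set (Clause V)) where
  size : ℕ
  size_pos : 0 < size
  clause : Fin size → Clause V
  prem : Fin size → Option (Fin size × Fin size × V)
  ok : ∀ i : Fin size,
    match prem i with
    | none => clause i ∈ F
    | some (j, k, x) =>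
        j < i ∧ k < i ∧ (x, true) ∈ clause j ∧ (x, false) ∈ clause k ∧
          clause i = (clause j).erase (x, true) ∪ (clause k).erase (x, false)
  last_empty : clause ⟨size - 1, Nat.sub_lt size_pos Nat.one_pos⟩ = ∅

/-- The refutation has width at most `w`. -/
def WidthLE {V : Type} [DecidableEq V] {F : Set (Clause V)}
    (R : Refutation V F) (w : ℕ) : Prop :=
  ∀ i, (R.clause i).card ≤ w

/-- The refutation has depth (longest path in the derivation DAG) at most `d`,
witnessed by a height function. -/
def DepthLE {V : Type} [DecidableEq V] {F : Set (Clause V)}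
    (R : Refutation V F) (d : ℕ) : Prop :=
  ∃ h : Fin R.size → ℕ, (∀ i, h i ≤ d) ∧
    ∀ i j k x, R.prem i = some (j, k, x) → h j < h i ∧ h k < h i


/-! ### Index-width and the extension-variable 3-CNF encoding -/

/-- Index-width of a clause: number of blocks (w.r.t. the block map `blk`) it mentions. -/
def iw {V : Type} {nB : ℕ} [DecidableEq V] (blk : V → Fin nB) (C : Clause V) : ℕ :=
  (C.image fun l => blk l.1).card

/-- The refutation has index-width at most `w`. -/
def IndexWidthLE {V : Type} [DecidableEq V] {nB : ℕ} {F : Set (Clause V)}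
    (blk : V → Fin nB) (R : Refutation V F) (w : ℕ) : Prop :=
  ∀ i, iw blk (R.clause i) ≤ w

theorem iw_mono {V : Type} {nB : ℕ} [DecidableEq V] (blk : V → Fin nB)
    {A B : Clause V} (h : A ⊆ B) : iw blk A ≤ iw blk B :=
  Finset.card_le_card (Finset.image_subset_image h)

/-- Extension variables: one variable `y_D` for every clause `D` of index-width at most `k`. -/
abbrev ExtVar {V : Type} {nB : ℕ} [DecidableEq V] (blk : V → Fin nB) (k : ℕ) : Type :=
  {D : Clause V // iw blk D ≤ k}

/-- The extension-variable 3-CNF encoding `F'` of a CNF `F` of index-width `k`: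
unit clauses `y_D` for `D ∈ F`; clauses forcing `y_{¬x} = ¬ y_x`; and clauses forcing
`y_{A ∨ B} ↔ (y_A ∨ y_B)` for all clauses of index-width at most `k`. -/
def ExtEnc {V : Type} {nB : ℕ} [DecidableEq V] (blk : V → Fin nB) (k : ℕ)
    (F : Set (Clause V)) : Set (Clause (ExtVar blk k)) :=
  { C | (∃ D ∈ F, ∃ h : iw blk D ≤ k, C = {((⟨D, h⟩ : ExtVar blk k), true)}) ∨
        (∃ x : V, ∃ hp : iw blk ({(x, true)} : Clause V) ≤ k,
            ∃ hn : iw blk ({(x, false)} : Clause V) ≤ k,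
          C = {((⟨{(x, true)}, hp⟩ : ExtVar blk k), true), (⟨{(x, false)}, hn⟩, true)} ∨
          C = {((⟨{(x, true)}, hp⟩ : ExtVar blk k), false), (⟨{(x, false)}, hn⟩, false)}) ∨
        (∃ A B : Clause V, ∃ hA : iw blk A ≤ k, ∃ hB : iw blk B ≤ k,
            ∃ hD : iw blk (A ∪ B) ≤ k,
          C = {((⟨A ∪ B, hD⟩ : ExtVar blk k), false), (⟨A, hA⟩, true), (⟨B, hB⟩, true)} ∨
          C = {((⟨A ∪ B, hD⟩ : ExtVar blk k), true), (⟨A, hA⟩, false)} ∨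
          C = {((⟨A ∪ B, hD⟩ : ExtVar blk k), true), (⟨B, hB⟩, false)}) }


/-! ### Auxiliary machinery -/

section Aux

variable {V : Type} [DecidableEq V]

/-- Negation of a literal. -/
def negL (l : V × Bool) : V × Bool := (l.1, !l.2)

/-- A tautological clause. -/
def Taut (C : Clause V) : Prop := ∃ x, (x, true) ∈ C ∧ (x, false) ∈ C

lemma Taut.mono {C D : Clause V} (h : C ⊆ D) : Taut C → Taut D :=
  fun ⟨x, h1, h2⟩ => ⟨x, h h1, h h2⟩

variable {nB : ℕ} (blk : V → Fin nB)

lemma iw_union_le (A B : Clause V) : iw blk (A ∪ B) ≤ iw blk A + iw blk B := by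
  simpa [iw, Finset.image_union] using
    Finset.card_union_le (A.image fun l => blk l.1) (B.image fun l => blk l.1)

lemma iw_le_card (C : Clause V) : iw blk C ≤ C.card := Finset.card_image_le

@[simp] lemma iw_empty : iw blk (∅ : Clause V) = 0 := by simp [iw]

lemma iw_sup_le {ι : Type*} [DecidableEq ι] (s : Finset ι) (f : ι → Clause V) (k : ℕ)
    (hk : ∀ i ∈ s, iw blk (f i) ≤ k) : iw blk (s.sup f) ≤ k * s.card := by
  induction s using Finset.induction_on with
  | empty => simp
  | @insert a s ha ih =>
      rw [Finset.sup_insert]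
      calc iw blk (f a ⊔ s.sup f) ≤ iw blk (f a) + iw blk (s.sup f) := iw_union_le blk _ _
        _ ≤ k + k * s.card := by
            exact Nat.add_le_add (hk a (Finset.mem_insert_self a s))
              (ih fun i hi => hk i (Finset.mem_insert_of_mem hi))
        _ = k * (insert a s).card := by
            rw [Finset.card_insert_of_notMem ha]; ring

/-- Bounded-depth, bounded-index-width derivability from `F`. -/
inductive DB (F : Set (Clause V)) (W : ℕ) : ℕ → Clause V → Prop
  | ax {e : ℕ} {C : Clause V} : C ∈ F → iw blk C ≤ W → DB F W e C
  | res {e : ℕ} {A B : Clause V} {x : V} : DB F W e A → DB F W e B →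
      (x, true) ∈ A → (x, false) ∈ B →
      iw blk (A.erase (x, true) ∪ B.erase (x, false)) ≤ W →
      DB F W (e + 1) (A.erase (x, true) ∪ B.erase (x, false))

lemma DB.mono {F : Set (Clause V)} {W : ℕ} {e e' : ℕ} {C : Clause V}
    (h : DB blk F W e C) (hee : e ≤ e') : DB blk F W e' C := by
  induction h generalizing e' with
  | ax h1 h2 => exact DB.ax h1 h2
  | @res e A B x hA hB hxA hxB hiw ihA ihB =>
      obtain ⟨e'', rfl⟩ : ∃ e'', e' = e'' + 1 :=
        ⟨e' - 1, by omega⟩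
      exact DB.res (ihA (by omega)) (ihB (by omega)) hxA hxB hiw

/-- Taut-or-derivable-subset, the key invariant. -/
def Qd (F : Set (Clause V)) (W e : ℕ) (T : Clause V) : Prop :=
  Taut T ∨ ∃ T', T' ⊆ T ∧ DB blk F W e T'

lemma Qd.monoSet {F : Set (Clause V)} {W e : ℕ} {T T' : Clause V} (hss : T ⊆ T')
    (h : Qd blk F W e T) : Qd blk F W e T' := by
  rcases h with h | ⟨X, hX, hD⟩
  · exact Or.inl (h.mono hss)
  · exact Or.inr ⟨X, hX.trans hss, hD⟩

lemma Qd.monoDepth {F : Set (Clause V)} {W e e' : ℕ} {T : Clause V} (hee : e ≤ e')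
    (h : Qd blk F W e T) : Qd blk F W e' T := by
  rcases h with h | ⟨X, hX, hD⟩
  · exact Or.inl h
  · exact Or.inr ⟨X, hX, hD.mono blk hee⟩

end Aux

section Combine

set_option linter.unusedSectionVars false

variable {V : Type} [DecidableEq V] {nB : ℕ} (blk : V → Fin nB)

lemma negL_negL (l : V × Bool) : negL (negL l) = l := by
  simp [negL]

lemma taut_insert {T : Clause V} {l : V × Bool} (h : Taut (insert l T)) :
    Taut T ∨ negL l ∈ T := by
  obtain ⟨x, h1, h2⟩ := h
  rcases Finset.mem_insert.mp h1 with h1 | h1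
  · rcases Finset.mem_insert.mp h2 with h2 | h2
    · exact absurd (h1 ▸ h2) (by simp)
    · right; rw [← h1, negL]; simpa using h2
  · rcases Finset.mem_insert.mp h2 with h2 | h2
    · right; rw [← h2, negL]; simpa using h1
    · exact Or.inl ⟨x, h1, h2⟩

lemma combine {F : Set (Clause V)} {W : ℕ} {T : Clause V} (hT : ¬ Taut T) :
    ∀ (Dc : Clause V) {e : ℕ}, iw blk (T ∪ Dc) ≤ W →
      Qd blk F W e (T ∪ Dc) → (∀ l ∈ Dc, Qd blk F W e (T ∪ {negL l})) →
      ∃ T', T' ⊆ T ∧ DB blk F W (e + Dc.card) T' := by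
  intro Dc
  induction Dc using Finset.induction_on with
  | empty =>
      intro e hiw hQ _
      rw [Finset.union_empty] at hQ
      rcases hQ with h | h
      · exact absurd h hT
      · simpa using h
  | @insert a s ha ih =>
      intro e hiw hQ hl
      rw [Finset.union_insert] at hQ
      have hins : T ∪ s ⊆ T ∪ insert a s :=
        Finset.union_subset_union_right (Finset.subset_insert a s)
      have hQa : Qd blk F W e (T ∪ {negL a}) := hl a (Finset.mem_insert_self a s)
      rw [Finset.union_comm, ← Finset.insert_eq] at hQa
      have hstep : Qd blk F W (e + 1) (T ∪ s) := by
        by_cases hTs : Taut (T ∪ s)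
        · exact Or.inl hTs
        have fromNeg : negL a ∈ T ∪ s → Qd blk F W (e + 1) (T ∪ s) := by
          intro hmem
          refine Qd.monoDepth blk (Nat.le_succ e) (Qd.monoSet blk ?_ hQa)
          intro y hy
          rcases Finset.mem_insert.mp hy with hy | hy
          · rwa [hy]
          · exact Finset.mem_union_left _ hy
        rcases hQ with htaut | ⟨X, hX, dX⟩
        · rcases taut_insert htaut with h | h
          · exact absurd h hTs
          · exact fromNeg h
        · by_cases haX : a ∈ X
          · rcases hQa with htaut | ⟨Y, hY, dY⟩
            · rcases taut_insert htaut with h | h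
              · exact absurd h hT
              · -- a ∈ T (since negL (negL a) = a)
                rw [negL_negL] at h
                refine Or.inr ⟨X, ?_, dX.mono blk (Nat.le_succ e)⟩
                intro y hy
                rcases Finset.mem_insert.mp (hX hy) with hy' | hy'
                · exact hy' ▸ Finset.mem_union_left _ h
                · exact hy'
            · by_cases hnaY : negL a ∈ Y
              · -- resolve X and Y on the variable of a
                obtain ⟨xa, ba⟩ := a
                have hXsub : ∀ {l}, l ∈ X → l ≠ (xa, ba) → l ∈ T ∪ s := by
                  intro l hlX hlne
                  rcases Finset.mem_insert.mp (hX hlX) with h | h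
                  · exact absurd h hlne
                  · exact h
                have hYsub : ∀ {l}, l ∈ Y → l ≠ negL (xa, ba) → l ∈ T ∪ s := by
                  intro l hlY hlne
                  rcases Finset.mem_insert.mp (hY hlY) with h | h
                  · exact absurd h hlne
                  · exact Finset.mem_union_left _ h
                cases ba with
                | true =>
                    have hres : X.erase (xa, true) ∪ Y.erase (xa, false) ⊆ T ∪ s := by
                      intro y hy
                      rcases Finset.mem_union.mp hy with hy | hy
                      · exact hXsub (Finset.mem_of_mem_erase hy) (Finset.ne_of_mem_erase hy)
                      · exact hYsub (Finset.mem_of_mem_erase hy)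
                          (by simpa [negL] using Finset.ne_of_mem_erase hy)
                    refine Or.inr ⟨_, hres, DB.res dX dY haX (by simpa [negL] using hnaY) ?_⟩
                    exact le_trans (iw_mono blk (hres.trans hins)) hiw
                | false =>
                    have hres : Y.erase (xa, true) ∪ X.erase (xa, false) ⊆ T ∪ s := by
                      intro y hy
                      rcases Finset.mem_union.mp hy with hy | hy
                      · exact hYsub (Finset.mem_of_mem_erase hy)
                          (by simpa [negL] using Finset.ne_of_mem_erase hy)
                      · exact hXsub (Finset.mem_of_mem_erase hy) (Finset.ne_of_mem_erase hy)
                    refine Or.inr ⟨_, hres, DB.res dY dX (by simpa [negL] using hnaY) haX ?_⟩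
                    exact le_trans (iw_mono blk (hres.trans hins)) hiw
              · -- Y ⊆ T
                refine Or.inr ⟨Y, ?_, dY.mono blk (Nat.le_succ e)⟩
                intro y hy
                rcases Finset.mem_insert.mp (hY hy) with h | h
                · exact absurd (h ▸ hy) hnaY
                · exact Finset.mem_union_left _ h
          · -- a ∉ X
            refine Or.inr ⟨X, ?_, dX.mono blk (Nat.le_succ e)⟩
            intro y hy
            rcases Finset.mem_insert.mp (hX hy) with h | h
            · exact absurd (h ▸ hy) haX
            · exact h
      obtain ⟨T', hT', dT'⟩ := ih (e := e + 1)
        (le_trans (iw_mono blk hins) hiw) hstep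
        (fun l hls => Qd.monoDepth blk (Nat.le_succ e)
          (hl l (Finset.mem_insert_of_mem hls)))
      refine ⟨T', hT', ?_⟩
      rw [Finset.card_insert_of_notMem ha]
      have heq : e + 1 + s.card = e + (s.card + 1) := by omega
      rwa [← heq]

end Combine

section Trans

set_option linter.unusedSectionVars false

variable {V : Type} [DecidableEq V] {nB : ℕ} (blk : V → Fin nB) {k : ℕ}

/-- Positive extension variables of a clause over extension variables. -/
def posE (C' : Clause (ExtVar blk k)) : Finset (ExtVar blk k) :=
  (C'.filter (fun l => l.2 = true)).image Prod.fst

/-- Negative extension variables of a clause over extension variables. -/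
def negE (C' : Clause (ExtVar blk k)) : Finset (ExtVar blk k) :=
  (C'.filter (fun l => l.2 = false)).image Prod.fst

lemma mem_posE {C' : Clause (ExtVar blk k)} {D : ExtVar blk k} :
    D ∈ posE blk C' ↔ (D, true) ∈ C' := by
  simp only [posE, Finset.mem_image, Finset.mem_filter]
  constructor
  · rintro ⟨⟨D', b⟩, ⟨hmem, hb⟩, rfl⟩
    simp only at hb
    subst hb; exact hmem
  · intro h; exact ⟨(D, true), ⟨h, rfl⟩, rfl⟩

lemma mem_negE {C' : Clause (ExtVar blk k)} {D : ExtVar blk k} :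
    D ∈ negE blk C' ↔ (D, false) ∈ C' := by
  simp only [negE, Finset.mem_image, Finset.mem_filter]
  constructor
  · rintro ⟨⟨D', b⟩, ⟨hmem, hb⟩, rfl⟩
    simp only at hb
    subst hb; exact hmem
  · intro h; exact ⟨(D, false), ⟨h, rfl⟩, rfl⟩

/-- Translation of a clause over extension variables, given a selector `σ`
picking a literal out of each negatively occurring extension variable. -/
def TransC (C' : Clause (ExtVar blk k)) (σ : ExtVar blk k → V × Bool) : Clause V :=
  (posE blk C').sup (fun D => D.val) ∪ (negE blk C').image (fun E => negL (σ E))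

lemma mem_transC {C' : Clause (ExtVar blk k)} {σ : ExtVar blk k → V × Bool} {l : V × Bool} :
    l ∈ TransC blk C' σ ↔
      (∃ D ∈ posE blk C', l ∈ D.val) ∨ ∃ E ∈ negE blk C', l = negL (σ E) := by
  simp [TransC, Finset.mem_union, Finset.mem_sup, Finset.mem_image, eq_comm]

@[simp] lemma transC_empty (σ : ExtVar blk k → V × Bool) :
    TransC blk (∅ : Clause (ExtVar blk k)) σ = ∅ := by
  simp [TransC, posE, negE]

lemma iw_transC_le (C' : Clause (ExtVar blk k)) (σ : ExtVar blk k → V × Bool) :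
    iw blk (TransC blk C' σ) ≤ (k + 1) * C'.card := by
  have h1 : iw blk ((posE blk C').sup (fun D => D.val)) ≤ k * C'.card := by
    refine le_trans (iw_sup_le blk _ _ k fun D _ => D.property) ?_
    exact Nat.mul_le_mul_left k (le_trans Finset.card_image_le (Finset.card_filter_le _ _))
  have h2 : iw blk ((negE blk C').image (fun E => negL (σ E))) ≤ C'.card := by
    refine le_trans (iw_le_card blk _) ?_
    exact le_trans Finset.card_image_le
      (le_trans Finset.card_image_le (Finset.card_filter_le _ _))
  calc iw blk (TransC blk C' σ) ≤ _ + _ := iw_union_le blk _ _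
    _ ≤ k * C'.card + C'.card := Nat.add_le_add h1 h2
    _ = (k + 1) * C'.card := by ring

/-- A clause of index-width at most `k` over blocks of size at most `m`
has at most `2 * k * m` literals. -/
lemma card_le_of_iw [Fintype V] {m : ℕ}
    (hm : ∀ b : Fin nB, (Finset.univ.filter fun v => blk v = b).card ≤ m)
    {D : Clause V} (hD : iw blk D ≤ k) : D.card ≤ 2 * k * m := by
  set S : Finset V := D.image Prod.fst with hS
  have h1 : D.card ≤ S.card * 2 := by
    have hsub : D ⊆ S ×ˢ (Finset.univ : Finset Bool) := by
      intro l hl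
      exact Finset.mem_product.mpr ⟨Finset.mem_image_of_mem _ hl, Finset.mem_univ _⟩
    calc D.card ≤ (S ×ˢ (Finset.univ : Finset Bool)).card := Finset.card_le_card hsub
      _ = S.card * 2 := by rw [Finset.card_product, Finset.card_univ, Fintype.card_bool]
  have h2 : S.card ≤ k * m := by
    have hsub : S ⊆ (S.image blk).biUnion
        (fun b => Finset.univ.filter fun v => blk v = b) := by
      intro x hx
      exact Finset.mem_biUnion.mpr ⟨blk x, Finset.mem_image_of_mem _ hx,
        Finset.mem_filter.mpr ⟨Finset.mem_univ _, rfl⟩⟩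
    have himg : (S.image blk).card ≤ k := by
      have : S.image blk = D.image (fun l => blk l.1) := by
        rw [hS, Finset.image_image]; rfl
      rw [this]; exact hD
    calc S.card ≤ ((S.image blk).biUnion
          (fun b => Finset.univ.filter fun v => blk v = b)).card := Finset.card_le_card hsub
      _ ≤ ∑ b ∈ S.image blk, (Finset.univ.filter fun v => blk v = b).card :=
          Finset.card_biUnion_le
      _ ≤ (S.image blk).card * m := by
          refine le_trans (Finset.sum_le_card_nsmul _ _ m fun b _ => hm b) ?_
          simp [smul_eq_mul]
      _ ≤ k * m := Nat.mul_le_mul_right m himg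
  calc D.card ≤ S.card * 2 := h1
    _ ≤ k * m * 2 := Nat.mul_le_mul_right 2 h2
    _ = 2 * k * m := by ring

end Trans

section Sim

set_option linter.unusedSectionVars false
set_option maxHeartbeats 1000000

variable {V : Type} [DecidableEq V] [Fintype V] {nB : ℕ} {k : ℕ}

lemma sim (blk : V → Fin nB) (F : Set (Clause V))
    (hF : ∀ C ∈ F, iw blk C ≤ k)
    {m : ℕ} (hm : ∀ b : Fin nB, (Finset.univ.filter fun v => blk v = b).card ≤ m)
    (R' : Refutation (ExtVar blk k) (ExtEnc blk k F)) {w d : ℕ}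
    (hw : WidthLE R' w) (hw1 : 1 ≤ w)
    (ht : Fin R'.size → ℕ) (htd : ∀ i, ht i ≤ d)
    (hdec : ∀ i j kk x, R'.prem i = some (j, kk, x) → ht j < ht i ∧ ht kk < ht i)
    (l₀ : V × Bool) :
    DB blk F ((2 * k + 2) * w) (2 * k * m * d) ∅ := by
  set W := (2 * k + 2) * w with hW
  set B := 2 * k * m with hB
  have hkW : k ≤ W := by
    calc k ≤ (2 * k + 2) * 1 := by omega
      _ ≤ (2 * k + 2) * w := Nat.mul_le_mul_left _ hw1
  have hiwT : ∀ (C' : Clause (ExtVar blk k)) (σ : ExtVar blk k → V × Bool),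
      C'.card ≤ w → iw blk (TransC blk C' σ) ≤ (k + 1) * w :=
    fun C' σ hc => le_trans (iw_transC_le blk C' σ) (Nat.mul_le_mul_left _ hc)
  have main : ∀ (N : ℕ) (i : Fin R'.size), ht i = N →
      ∀ σ : ExtVar blk k → V × Bool, (∀ E ∈ negE blk (R'.clause i), σ E ∈ E.val) →
      Qd blk F W (B * N) (TransC blk (R'.clause i) σ) := by
    intro N
    induction N using Nat.strong_induction_on with
    | _ N IH =>
      intro i hN σ hσ
      have hok := R'.ok i
      rcases hp : R'.prem i with _ | ⟨j, kk, D⟩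
      · rw [hp] at hok
        -- axiom case: R'.clause i ∈ ExtEnc blk k F
        simp only [ExtEnc, Set.mem_setOf_eq] at hok
        rcases hok with ⟨Dc, hDF, hiwD, hCeq⟩ | ⟨x, hxp, hxn, hCeq | hCeq⟩ |
          ⟨A, Bc, hA, hBc, hD, hCeq | hCeq | hCeq⟩
        · -- unit clause y_D for D ∈ F
          rw [hCeq]
          refine Or.inr ⟨Dc, ?_, DB.ax hDF (le_trans (hF Dc hDF) hkW)⟩
          intro l hl
          exact (mem_transC blk).mpr (Or.inl ⟨⟨Dc, hiwD⟩, (mem_posE blk).mpr (by simp), hl⟩)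
        · -- y_{x+} ∨ y_{x-}
          rw [hCeq]
          refine Or.inl ⟨x, ?_, ?_⟩
          · exact (mem_transC blk).mpr (Or.inl ⟨⟨{(x, true)}, hxp⟩,
              (mem_posE blk).mpr (by simp), by simp⟩)
          · exact (mem_transC blk).mpr (Or.inl ⟨⟨{(x, false)}, hxn⟩,
              (mem_posE blk).mpr (by simp), by simp⟩)
        · -- ¬y_{x+} ∨ ¬y_{x-}
          rw [hCeq] at hσ ⊢
          have h1 : σ ⟨{(x, true)}, hxp⟩ ∈ ({(x, true)} : Clause V) :=
            hσ ⟨{(x, true)}, hxp⟩ ((mem_negE blk).mpr (by simp))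
          have h2 : σ ⟨{(x, false)}, hxn⟩ ∈ ({(x, false)} : Clause V) :=
            hσ ⟨{(x, false)}, hxn⟩ ((mem_negE blk).mpr (by simp))
          refine Or.inl ⟨x, ?_, ?_⟩
          · refine (mem_transC blk).mpr (Or.inr ⟨⟨{(x, false)}, hxn⟩,
              (mem_negE blk).mpr (by simp), ?_⟩)
            rw [Finset.mem_singleton.mp h2]; rfl
          · refine (mem_transC blk).mpr (Or.inr ⟨⟨{(x, true)}, hxp⟩,
              (mem_negE blk).mpr (by simp), ?_⟩)
            rw [Finset.mem_singleton.mp h1]; rfl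
        · -- ¬y_{A∪B} ∨ y_A ∨ y_B
          rw [hCeq] at hσ ⊢
          have h1 : σ ⟨A ∪ Bc, hD⟩ ∈ A ∪ Bc := hσ ⟨A ∪ Bc, hD⟩ ((mem_negE blk).mpr (by simp))
          rcases hps : σ ⟨A ∪ Bc, hD⟩ with ⟨x, b⟩
          rw [hps] at h1
          have hpos : (x, b) ∈ TransC blk
              ({(⟨A ∪ Bc, hD⟩, false), (⟨A, hA⟩, true), (⟨Bc, hBc⟩, true)} :
                Clause (ExtVar blk k)) σ := by
            rcases Finset.mem_union.mp h1 with h | h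
            · exact (mem_transC blk).mpr (Or.inl ⟨⟨A, hA⟩, (mem_posE blk).mpr (by simp), h⟩)
            · exact (mem_transC blk).mpr (Or.inl ⟨⟨Bc, hBc⟩, (mem_posE blk).mpr (by simp), h⟩)
          have hneg : (x, !b) ∈ TransC blk
              ({(⟨A ∪ Bc, hD⟩, false), (⟨A, hA⟩, true), (⟨Bc, hBc⟩, true)} :
                Clause (ExtVar blk k)) σ := by
            refine (mem_transC blk).mpr (Or.inr ⟨⟨A ∪ Bc, hD⟩,
              (mem_negE blk).mpr (by simp), ?_⟩)
            rw [hps]; rfl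
          cases b with
          | true => exact Or.inl ⟨x, hpos, by simpa using hneg⟩
          | false => exact Or.inl ⟨x, by simpa using hneg, hpos⟩
        · -- y_{A∪B} ∨ ¬y_A
          rw [hCeq] at hσ ⊢
          have h1 : σ ⟨A, hA⟩ ∈ A := hσ ⟨A, hA⟩ ((mem_negE blk).mpr (by simp))
          rcases hps : σ ⟨A, hA⟩ with ⟨x, b⟩
          rw [hps] at h1
          have hpos : (x, b) ∈ TransC blk
              ({(⟨A ∪ Bc, hD⟩, true), (⟨A, hA⟩, false)} : Clause (ExtVar blk k)) σ :=
            (mem_transC blk).mpr (Or.inl ⟨⟨A ∪ Bc, hD⟩, (mem_posE blk).mpr (by simp),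
              Finset.mem_union_left _ h1⟩)
          have hneg : (x, !b) ∈ TransC blk
              ({(⟨A ∪ Bc, hD⟩, true), (⟨A, hA⟩, false)} : Clause (ExtVar blk k)) σ := by
            refine (mem_transC blk).mpr (Or.inr ⟨⟨A, hA⟩, (mem_negE blk).mpr (by simp), ?_⟩)
            rw [hps]; rfl
          cases b with
          | true => exact Or.inl ⟨x, hpos, by simpa using hneg⟩
          | false => exact Or.inl ⟨x, by simpa using hneg, hpos⟩
        · -- y_{A∪B} ∨ ¬y_B
          rw [hCeq] at hσ ⊢
          have h1 : σ ⟨Bc, hBc⟩ ∈ Bc := hσ ⟨Bc, hBc⟩ ((mem_negE blk).mpr (by simp))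
          rcases hps : σ ⟨Bc, hBc⟩ with ⟨x, b⟩
          rw [hps] at h1
          have hpos : (x, b) ∈ TransC blk
              ({(⟨A ∪ Bc, hD⟩, true), (⟨Bc, hBc⟩, false)} : Clause (ExtVar blk k)) σ :=
            (mem_transC blk).mpr (Or.inl ⟨⟨A ∪ Bc, hD⟩, (mem_posE blk).mpr (by simp),
              Finset.mem_union_right _ h1⟩)
          have hneg : (x, !b) ∈ TransC blk
              ({(⟨A ∪ Bc, hD⟩, true), (⟨Bc, hBc⟩, false)} : Clause (ExtVar blk k)) σ := by
            refine (mem_transC blk).mpr (Or.inr ⟨⟨Bc, hBc⟩, (mem_negE blk).mpr (by simp), ?_⟩)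
            rw [hps]; rfl
          cases b with
          | true => exact Or.inl ⟨x, hpos, by simpa using hneg⟩
          | false => exact Or.inl ⟨x, by simpa using hneg, hpos⟩
      · -- resolution case
        rw [hp] at hok
        obtain ⟨hji, hki, hDj, hDk, hclause⟩ := hok
        obtain ⟨hhj, hhk⟩ := hdec i j kk D hp
        rw [hN] at hhj hhk
        have hN1 : 1 ≤ N := by omega
        set T := TransC blk (R'.clause i) σ with hT
        -- subset facts on pos/neg parts
        have hposj : ∀ E ∈ posE blk (R'.clause j), E = D ∨ E ∈ posE blk (R'.clause i) := by
          intro E hE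
          by_cases hED : E = D
          · exact Or.inl hED
          · refine Or.inr ((mem_posE blk).mpr ?_)
            rw [hclause]
            exact Finset.mem_union_left _ (Finset.mem_erase.mpr
              ⟨by simp [hED], (mem_posE blk).mp hE⟩)
        have hnegj : ∀ E ∈ negE blk (R'.clause j), E ∈ negE blk (R'.clause i) := by
          intro E hE
          refine (mem_negE blk).mpr ?_
          rw [hclause]
          exact Finset.mem_union_left _ (Finset.mem_erase.mpr
            ⟨by simp, (mem_negE blk).mp hE⟩)
        have hposk : ∀ E ∈ posE blk (R'.clause kk), E ∈ posE blk (R'.clause i) := by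
          intro E hE
          refine (mem_posE blk).mpr ?_
          rw [hclause]
          exact Finset.mem_union_right _ (Finset.mem_erase.mpr
            ⟨by simp, (mem_posE blk).mp hE⟩)
        have hnegk : ∀ E ∈ negE blk (R'.clause kk), E = D ∨ E ∈ negE blk (R'.clause i) := by
          intro E hE
          by_cases hED : E = D
          · exact Or.inl hED
          · refine Or.inr ((mem_negE blk).mpr ?_)
            rw [hclause]
            exact Finset.mem_union_right _ (Finset.mem_erase.mpr
              ⟨by simp [hED], (mem_negE blk).mp hE⟩)
        -- the A-side premise
        have hσj : ∀ E ∈ negE blk (R'.clause j), σ E ∈ E.val :=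
          fun E hE => hσ E (hnegj E hE)
        have hTa : TransC blk (R'.clause j) σ ⊆ T ∪ D.val := by
          intro l hl
          rcases (mem_transC blk).mp hl with ⟨E, hE, hlE⟩ | ⟨E, hE, rfl⟩
          · rcases hposj E hE with rfl | hE'
            · exact Finset.mem_union_right _ hlE
            · exact Finset.mem_union_left _ ((mem_transC blk).mpr (Or.inl ⟨E, hE', hlE⟩))
          · exact Finset.mem_union_left _ ((mem_transC blk).mpr
              (Or.inr ⟨E, hnegj E hE, rfl⟩))
        have hQa : Qd blk F W (B * (N - 1)) (T ∪ D.val) := by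
          refine Qd.monoSet blk hTa (Qd.monoDepth blk ?_
            (IH (ht j) hhj j rfl σ hσj))
          exact Nat.mul_le_mul_left _ (by omega)
        -- the B-side premises
        have hQb : ∀ l ∈ D.val, Qd blk F W (B * (N - 1)) (T ∪ {negL l}) := by
          intro l hl
          set σb : ExtVar blk k → V × Bool :=
            fun E => if E ∈ negE blk (R'.clause i) then σ E else l with hσbdef
          have hσbk : ∀ E ∈ negE blk (R'.clause kk), σb E ∈ E.val := by
            intro E hE
            by_cases hEi : E ∈ negE blk (R'.clause i)
            · simpa [hσbdef, hEi] using hσ E hEi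
            · rcases hnegk E hE with rfl | hEi'
              · simpa [hσbdef, hEi] using hl
              · exact absurd hEi' hEi
          have hTb : TransC blk (R'.clause kk) σb ⊆ T ∪ {negL l} := by
            intro l' hl'
            rcases (mem_transC blk).mp hl' with ⟨E, hE, hlE⟩ | ⟨E, hE, rfl⟩
            · exact Finset.mem_union_left _ ((mem_transC blk).mpr
                (Or.inl ⟨E, hposk E hE, hlE⟩))
            · by_cases hEi : E ∈ negE blk (R'.clause i)
              · refine Finset.mem_union_left _ ((mem_transC blk).mpr
                  (Or.inr ⟨E, hEi, ?_⟩))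
                simp [hσbdef, hEi]
              · rcases hnegk E hE with rfl | hEi'
                · refine Finset.mem_union_right _ ?_
                  simp [hσbdef, hEi]
                · exact absurd hEi' hEi
          refine Qd.monoSet blk hTb (Qd.monoDepth blk ?_
            (IH (ht kk) hhk kk rfl σb hσbk))
          exact Nat.mul_le_mul_left _ (by omega)
        -- combine
        by_cases hTt : Taut T
        · exact Or.inl hTt
        · have hiwTD : iw blk (T ∪ D.val) ≤ W := by
            calc iw blk (T ∪ D.val) ≤ iw blk T + iw blk D.val := iw_union_le blk _ _
              _ ≤ (k + 1) * w + k := Nat.add_le_add (hiwT _ σ (hw i)) D.property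
              _ ≤ W := by
                  rw [hW]
                  have : k ≤ (k + 1) * w := by
                    calc k ≤ (k + 1) * 1 := by omega
                      _ ≤ (k + 1) * w := Nat.mul_le_mul_left _ hw1
                  nlinarith
          obtain ⟨T', hsub, dT'⟩ := combine blk hTt D.val hiwTD hQa hQb
          refine Or.inr ⟨T', hsub, dT'.mono blk ?_⟩
          have hcard : (D.val).card ≤ B := card_le_of_iw blk hm D.property
          calc B * (N - 1) + (D.val).card ≤ B * (N - 1) + B := Nat.add_le_add_left hcard _
            _ = B * (N - 1 + 1) := by ring
            _ = B * N := by rw [Nat.sub_add_cancel hN1]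
  -- apply at the final (empty) clause
  set iL : Fin R'.size := ⟨R'.size - 1, Nat.sub_lt R'.size_pos Nat.one_pos⟩ with hiL
  have hlast : R'.clause iL = ∅ := R'.last_empty
  have hσ0 : ∀ E ∈ negE blk (R'.clause iL), (fun _ => l₀) E ∈ E.val := by
    rw [hlast]; intro E hE; simp [negE] at hE
  have hfin := main (ht iL) iL rfl (fun _ => l₀) hσ0
  rw [hlast, transC_empty] at hfin
  rcases hfin with ⟨x, hx, -⟩ | ⟨T', hT', dT'⟩
  · exact absurd hx (by simp)
  · rw [Finset.subset_empty.mp hT'] at dT'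
    exact dT'.mono blk (Nat.mul_le_mul_left _ (htd iL))

end Sim

section Build

set_option linter.unusedSectionVars false
set_option maxHeartbeats 1000000

variable {V : Type} [DecidableEq V] {nB : ℕ} (blk : V → Fin nB)

/-- Validity of an `ℕ`-indexed derivation prefix of length `n`. -/
def NOk (F : Set (Clause V)) (cl : ℕ → Clause V) (pr : ℕ → Option (ℕ × ℕ × V)) (n : ℕ) : Prop :=
  ∀ i, i < n →
    match pr i with
    | none => cl i ∈ F
    | some (j, kk, x) => j < i ∧ kk < i ∧ (x, true) ∈ cl j ∧ (x, false) ∈ cl kk ∧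
        cl i = (cl j).erase (x, true) ∪ (cl kk).erase (x, false)

lemma db_build {F : Set (Clause V)} {W e : ℕ} {C : Clause V} (h : DB blk F W e C) :
    ∃ (n : ℕ) (cl : ℕ → Clause V) (pr : ℕ → Option (ℕ × ℕ × V)) (hg : ℕ → ℕ),
      0 < n ∧ NOk F cl pr n ∧ cl (n - 1) = C ∧
      (∀ i, i < n → iw blk (cl i) ≤ W) ∧ (∀ i, i < n → hg i ≤ e) ∧
      (∀ i, i < n → ∀ j kk x, pr i = some (j, kk, x) → hg j < hg i ∧ hg kk < hg i) := by
  induction h with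
  | @ax e C hC hiw =>
      refine ⟨1, fun _ => C, fun _ => none, fun _ => 0, Nat.one_pos, ?_, rfl, ?_, ?_, ?_⟩
      · intro i _; exact hC
      · intro i _; exact hiw
      · intro i _; exact Nat.zero_le _
      · intro i _ j kk x hx; cases hx
  | @res e A Bc x dA dB hxA hxB hiw ihA ihB =>
      obtain ⟨n1, cl1, pr1, hg1, hn1, hok1, hlast1, hiw1, hgt1, hdec1⟩ := ihA
      obtain ⟨n2, cl2, pr2, hg2, hn2, hok2, hlast2, hiw2, hgt2, hdec2⟩ := ihB
      set Cres : Clause V := A.erase (x, true) ∪ Bc.erase (x, false) with hCres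
      refine ⟨n1 + n2 + 1,
        fun i => if i < n1 then cl1 i else if i < n1 + n2 then cl2 (i - n1) else Cres,
        fun i => if i < n1 then pr1 i else if i < n1 + n2 then
          (pr2 (i - n1)).map (fun p => (p.1 + n1, p.2.1 + n1, p.2.2))
          else some (n1 - 1, n1 + n2 - 1, x),
        fun i => if i < n1 then hg1 i else if i < n1 + n2 then hg2 (i - n1) else e + 1,
        by omega, ?_, ?_, ?_, ?_, ?_⟩
      · -- NOk
        intro i hi
        by_cases h1 : i < n1
        · simp only [if_pos h1]
          have hk := hok1 i h1
          rcases hpi : pr1 i with _ | ⟨j, kk, xx⟩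
          · rw [hpi] at hk; exact hk
          · rw [hpi] at hk
            obtain ⟨hj, hkk, m1, m2, meq⟩ := hk
            have hj1 : j < n1 := lt_trans hj h1
            have hkk1 : kk < n1 := lt_trans hkk h1
            simp only [if_pos hj1, if_pos hkk1]
            exact ⟨hj, hkk, m1, m2, meq⟩
        · by_cases h2 : i < n1 + n2
          · have hi2 : i - n1 < n2 := by omega
            simp only [if_neg h1, if_pos h2]
            have hk := hok2 (i - n1) hi2
            rcases hpi : pr2 (i - n1) with _ | ⟨j, kk, xx⟩
            · rw [hpi] at hk
              simpa using hk
            · rw [hpi] at hk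
              obtain ⟨hj, hkk, m1, m2, meq⟩ := hk
              simp only [Option.map_some]
              have e1 : ¬ (j + n1 < n1) := by omega
              have e2 : j + n1 < n1 + n2 := by omega
              have e3 : ¬ (kk + n1 < n1) := by omega
              have e4 : kk + n1 < n1 + n2 := by omega
              simp only [if_neg e1, if_pos e2, if_neg e3, if_pos e4, Nat.add_sub_cancel]
              exact ⟨by omega, by omega, m1, m2, meq⟩
          · have hieq : i = n1 + n2 := by omega
            have e1 : ¬ (i < n1) := h1
            have e5 : n1 - 1 < n1 := by omega
            have e6 : ¬ (n1 + n2 - 1 < n1) := by omega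
            have e7 : n1 + n2 - 1 < n1 + n2 := by omega
            simp only [if_neg e1, if_neg h2, if_pos e5, if_neg e6, if_pos e7]
            have r1 : cl1 (n1 - 1) = A := hlast1
            have r2 : cl2 (n1 + n2 - 1 - n1) = Bc := by
              have : n1 + n2 - 1 - n1 = n2 - 1 := by omega
              rw [this]; exact hlast2
            rw [r1, r2]
            exact ⟨by omega, by omega, hxA, hxB, rfl⟩
      · -- last clause
        have e1 : ¬ (n1 + n2 + 1 - 1 < n1) := by omega
        have e2 : ¬ (n1 + n2 + 1 - 1 < n1 + n2) := by omega
        simp only [if_neg e1, if_neg e2]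
      · -- width
        intro i hi
        by_cases h1 : i < n1
        · simp only [if_pos h1]; exact hiw1 i h1
        · by_cases h2 : i < n1 + n2
          · simp only [if_neg h1, if_pos h2]; exact hiw2 (i - n1) (by omega)
          · simp only [if_neg h1, if_neg h2]; exact hiw
      · -- height bound
        intro i hi
        by_cases h1 : i < n1
        · simp only [if_pos h1]
          exact le_trans (hgt1 i h1) (Nat.le_succ e)
        · by_cases h2 : i < n1 + n2
          · simp only [if_neg h1, if_pos h2]
            exact le_trans (hgt2 (i - n1) (by omega)) (Nat.le_succ e)
          · simp only [if_neg h1, if_neg h2]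
            exact le_rfl
      · -- height decrease
        intro i hi j kk xx hpr
        by_cases h1 : i < n1
        · simp only [if_pos h1] at hpr
          have hk := hok1 i h1
          rw [hpr] at hk
          obtain ⟨hj, hkk, -, -, -⟩ := hk
          have := hdec1 i h1 j kk xx hpr
          have hj1 : j < n1 := lt_trans hj h1
          have hkk1 : kk < n1 := lt_trans hkk h1
          simp only [if_pos h1, if_pos hj1, if_pos hkk1]
          exact this
        · by_cases h2 : i < n1 + n2
          · simp only [if_neg h1, if_pos h2] at hpr
            rcases hpi : pr2 (i - n1) with _ | ⟨j', kk', xx'⟩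
            · rw [hpi] at hpr; cases hpr
            · rw [hpi] at hpr
              simp only [Option.map_some] at hpr
              obtain ⟨rfl, rfl, rfl⟩ : j' + n1 = j ∧ kk' + n1 = kk ∧ xx' = xx := by
                injection hpr with h'
                exact ⟨congrArg (fun p => p.1) h', congrArg (fun p => p.2.1) h',
                  congrArg (fun p => p.2.2) h'⟩
              have hk := hok2 (i - n1) (by omega)
              rw [hpi] at hk
              obtain ⟨hj, hkk, -, -, -⟩ := hk
              have := hdec2 (i - n1) (by omega) j' kk' xx' hpi
              have e1 : ¬ (j' + n1 < n1) := by omega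
              have e2 : j' + n1 < n1 + n2 := by omega
              have e3 : ¬ (kk' + n1 < n1) := by omega
              have e4 : kk' + n1 < n1 + n2 := by omega
              simp only [if_neg h1, if_pos h2, if_neg e1, if_pos e2, if_neg e3, if_pos e4,
                Nat.add_sub_cancel]
              exact this
          · simp only [if_neg h1, if_neg h2] at hpr
            obtain ⟨rfl, rfl, rfl⟩ : n1 - 1 = j ∧ n1 + n2 - 1 = kk ∧ x = xx := by
              injection hpr with h'
              exact ⟨congrArg (fun p => p.1) h', congrArg (fun p => p.2.1) h',
                congrArg (fun p => p.2.2) h'⟩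
            have e5 : n1 - 1 < n1 := by omega
            have e6 : ¬ (n1 + n2 - 1 < n1) := by omega
            have e7 : n1 + n2 - 1 < n1 + n2 := by omega
            simp only [if_neg h1, if_neg h2, if_pos e5, if_neg e6, if_pos e7]
            constructor
            · exact lt_of_le_of_lt (hgt1 (n1 - 1) e5) (Nat.lt_succ_self e)
            · exact lt_of_le_of_lt (hgt2 (n1 + n2 - 1 - n1) (by omega)) (Nat.lt_succ_self e)

lemma db_refutation {F : Set (Clause V)} {W e : ℕ} (h : DB blk F W e ∅) :
    ∃ R : Refutation V F, IndexWidthLE blk R W ∧ DepthLE R e := by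
  obtain ⟨n, cl, pr, hg, hn, hok, hlast, hiw, hgt, hdec⟩ := db_build blk h
  refine ⟨⟨n, hn, fun i => cl i.val,
    fun i => match pr i.val with
      | none => none
      | some (j, kk, x) =>
          if hjk : j < n ∧ kk < n then some (⟨j, hjk.1⟩, ⟨kk, hjk.2⟩, x) else none,
    ?_, hlast⟩, ?_, ?_⟩
  · intro i
    have hk := hok i.val i.isLt
    rcases hpi : pr i.val with _ | ⟨j, kk, x⟩ <;> rw [hpi] at hk <;> simp only [hpi]
    · exact hk
    · obtain ⟨hj, hkk, m1, m2, meq⟩ := hk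
      have hcond : j < n ∧ kk < n := ⟨lt_trans hj i.isLt, lt_trans hkk i.isLt⟩
      rw [dif_pos hcond]
      exact ⟨hj, hkk, m1, m2, meq⟩
  · intro i
    exact hiw i.val i.isLt
  · refine ⟨fun i => hg i.val, fun i => hgt i.val i.isLt, ?_⟩
    intro i j kk x hpr
    simp only at hpr
    rcases hpi : pr i.val with _ | ⟨j', kk', x'⟩ <;> rw [hpi] at hpr
    · cases hpr
    · by_cases hcond : j' < n ∧ kk' < n
      · simp only [dif_pos hcond] at hpr
        obtain ⟨h1, h2, h3⟩ : (⟨j', hcond.1⟩ : Fin n) = j ∧ (⟨kk', hcond.2⟩ : Fin n) = kk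
            ∧ x' = x := by
          injection hpr with h'
          exact ⟨congrArg (fun p => p.1) h', congrArg (fun p => p.2.1) h',
            congrArg (fun p => p.2.2) h'⟩
        have := hdec i.val i.isLt j' kk' x' hpi
        rw [← h1, ← h2]
        exact this
      · simp only [dif_neg hcond] at hpr
        cases hpr

/-- Soundness of resolution refutations. -/
lemma refutation_sound {V' : Type} [DecidableEq V'] {F : Set (Clause V')}
    (R : Refutation V' F) (α : V' → Bool) (hall : ∀ C ∈ F, SatC α C) : False := by
  have key : ∀ (N : ℕ) (i : Fin R.size), i.val = N → SatC α (R.clause i) := by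
    intro N
    induction N using Nat.strong_induction_on with
    | _ N IH =>
      intro i hN
      have hok := R.ok i
      rcases hp : R.prem i with _ | ⟨j, kk, x⟩ <;> rw [hp] at hok
      · exact hall _ hok
      · obtain ⟨hj, hkk, hxj, hxk, hcl⟩ := hok
        have sj := IH j.val (by rw [← hN]; exact hj) j rfl
        have sk := IH kk.val (by rw [← hN]; exact hkk) kk rfl
        obtain ⟨l, hl, hαl⟩ := sj
        by_cases hlx : l = (x, true)
        · obtain ⟨l', hl', hαl'⟩ := sk
          have hlx' : l' ≠ (x, false) := by
            rintro rfl
            rw [hlx] at hαl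
            simp only at hαl hαl'
            rw [hαl] at hαl'
            exact Bool.noConfusion hαl'
          refine ⟨l', ?_, hαl'⟩
          rw [hcl]
          exact Finset.mem_union_right _ (Finset.mem_erase.mpr ⟨hlx', hl'⟩)
        · refine ⟨l, ?_, hαl⟩
          rw [hcl]
          exact Finset.mem_union_left _ (Finset.mem_erase.mpr ⟨hlx, hl⟩)
  have hlastsat := key (R.size - 1) ⟨R.size - 1, Nat.sub_lt R.size_pos Nat.one_pos⟩ rfl
  rw [R.last_empty] at hlastsat
  obtain ⟨l, hl, -⟩ := hlastsat
  exact absurd hl (by simp)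

end Build

/-- A width-`w` depth-`d` refutation of the extension encoding `F'`
yields an index-width-`O(w)` depth-`O(dm)` refutation of `F`, where each block has at
most `m` variables. -/
theorem extension_encoding_refutation_backward :
    ∀ k : ℕ, ∃ a : ℕ, 0 < a ∧
      ∀ (V : Type) [inst : DecidableEq V] [fin : Fintype V], ∀ (n m : ℕ)
        (blk : V → Fin n) (F : Set (Clause V)),
        (∀ C ∈ F, iw blk C ≤ k) →
        (∀ b : Fin n, (Finset.univ.filter fun v => blk v = b).card ≤ m) →
        ∀ w d : ℕ,
          (∃ R' : Refutation (ExtVar blk k) (ExtEnc blk k F),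
            WidthLE R' w ∧ DepthLE R' d) →
          ∃ R : Refutation V F, IndexWidthLE blk R (a * w) ∧ DepthLE R (a * d * m) := by
  intro k
  refine ⟨2 * k + 2, by omega, ?_⟩
  intro V _ _ n m blk F hFiw hblk w d hex
  obtain ⟨R', hwle, hdep⟩ := hex
  rcases isEmpty_or_nonempty V with hV | hV
  · -- `V` is empty: the extension encoding forces `∅ ∈ F`.
    have hempty : (∅ : Clause V) ∈ F := by
      by_contra hne
      apply refutation_sound R' (fun _ => false)
      intro C hC
      simp only [ExtEnc, Set.mem_setOf_eq] at hC
      rcases hC with ⟨D, hDF, hiwD, hCeq⟩ | ⟨x, hxp, hxn, hCeq | hCeq⟩ |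
        ⟨A, Bc, hA, hB, hD, hCeq | hCeq | hCeq⟩
      · have hD0 : D = ∅ :=
          Finset.eq_empty_of_forall_notMem (fun l _ => hV.elim l.1)
        exact absurd (hD0 ▸ hDF) hne
      · exact hV.elim x
      · exact hV.elim x
      · exact ⟨(⟨A ∪ Bc, hD⟩, false), by rw [hCeq]; exact Finset.mem_insert_self _ _, rfl⟩
      · exact ⟨(⟨A, hA⟩, false), by rw [hCeq]; simp, rfl⟩
      · exact ⟨(⟨Bc, hB⟩, false), by rw [hCeq]; simp, rfl⟩
    refine ⟨⟨1, Nat.one_pos, fun _ => ∅, fun _ => none, fun i => hempty, rfl⟩, ?_, ?_⟩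
    · intro i; simp [iw]
    · exact ⟨fun _ => 0, fun _ => Nat.zero_le _, fun i j kk x h => by cases h⟩
  · obtain ⟨v0⟩ := hV
    obtain ⟨ht, htd, hdec⟩ := hdep
    have hm1 : 1 ≤ m := by
      have h0 : 0 < (Finset.univ.filter fun v => blk v = blk v0).card :=
        Finset.card_pos.mpr ⟨v0, by simp⟩
      exact le_trans h0 (hblk (blk v0))
    have hw1 : 1 ≤ w := by
      set iL : Fin R'.size := ⟨R'.size - 1, Nat.sub_lt R'.size_pos Nat.one_pos⟩ with hiL
      have hok := R'.ok iL
      rcases hp : R'.prem iL with _ | ⟨j, kk, x⟩ <;> rw [hp] at hok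
      · have hl : R'.clause iL = ∅ := R'.last_empty
        rw [hl] at hok
        simp only [ExtEnc, Set.mem_setOf_eq] at hok
        rcases hok with ⟨D, hDF, hiwD, hCeq⟩ | ⟨x, hxp, hxn, hCeq | hCeq⟩ |
          ⟨A, Bc, hA, hB, hD, hCeq | hCeq | hCeq⟩ <;>
          exact absurd hCeq.symm (by simp)
      · obtain ⟨-, -, hxj, -, -⟩ := hok
        have h0 : 0 < (R'.clause j).card := Finset.card_pos.mpr ⟨_, hxj⟩
        exact le_trans h0 (hwle j)
    have hdb := sim blk F hFiw hblk R' hwle hw1 ht htd hdec (v0, true)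
    have hdb2 : DB blk F ((2 * k + 2) * w) ((2 * k + 2) * d * m) ∅ :=
      hdb.mono blk (by nlinarith)
    obtain ⟨R, hRiw, hRd⟩ := db_refutation blk hdb2
    exact ⟨R, hRiw, hRd⟩

end Paper
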